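/- For every nonnegative integer k, every nonnegative real number r, and every positive real number ℓ, there exists a positive real number N such that the following holds. Let (G,φ) be a (0,ℓ]-bounded weighted graph, let m be a positive integer, and let R ⊆ V(G). If V(G)−R is (k,r)-centered in (G,φ), i.e., there exists S ⊆ V(G) with |S| ≤ k such that V(G)−R ⊆ N_{(G,φ)}^{≤r}[S], then every m-coloring of (G,φ)^ℓ − R has weak diameter in (G,φ)^ℓ at most N. -/

import Mathlib

open scoped ENNReal

/-- The length of a walk in an edge-weighted graph: the sum of the weights of its edges. -/
def walkLen {V : Type} {G : SimpleGraph V} (w : Sym2 V → ℝ) {x y : V} (p : G.Walk x y) : ℝ :=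
  (p.edges.map w).sum

/-- The distance between two vertices of an edge-weighted graph: the infimum of the lengths
of paths between them (`⊤` if there is no such path). -/
noncomputable def wDist {V : Type} (G : SimpleGraph V) (w : Sym2 V → ℝ) (x y : V) : ℝ≥0∞ :=
  ⨅ q : {q : G.Walk x y // q.IsPath}, ENNReal.ofReal (walkLen w q.1)

lemma wDist_comm {V : Type} (G : SimpleGraph V) (w : Sym2 V → ℝ) (x y : V) :
    wDist G w x y = wDist G w y x := by
  have key : ∀ a b : V, wDist G w a b ≤ wDist G w b a := by
    intro a b
    refine le_iInf fun q => ?_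
    refine iInf_le_of_le ⟨q.1.reverse, q.2.reverse⟩ ?_
    simp [walkLen, List.sum_reverse]
  exact le_antisymm (key x y) (key y x)

/-- The power graph: two distinct vertices are adjacent iff their weighted distance
is at most `r`. -/
noncomputable def powerGraph {V : Type} (G : SimpleGraph V) (w : Sym2 V → ℝ) (r : ℝ) :
    SimpleGraph V where
  Adj x y := x ≠ y ∧ wDist G w x y ≤ ENNReal.ofReal r
  symm := by
    refine ⟨?_⟩
    rintro x y ⟨hne, hle⟩
    exact ⟨hne.symm, by rwa [wDist_comm]⟩
  loopless := ⟨fun x h => h.1 rfl⟩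

/-- The unit-length (hop) distance in an unweighted graph. -/
noncomputable def hopDist {V : Type} (L : SimpleGraph V) (x y : V) : ℝ≥0∞ :=
  ⨅ q : L.Walk x y, (q.length : ℝ≥0∞)

/-- Same-colour adjacency within a vertex set `A`. -/
def colorGraph {V : Type} (K : SimpleGraph V) (A : Set V) {m : ℕ} (c : V → Fin m) :
    SimpleGraph V where
  Adj x y := K.Adj x y ∧ x ∈ A ∧ y ∈ A ∧ c x = c y
  symm := by
    refine ⟨?_⟩
    rintro x y ⟨h, hx, hy, hc⟩
    exact ⟨h.symm, hy, hx, hc.symm⟩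
  loopless := ⟨fun x h => K.loopless.irrefl x h.1⟩

/-- The colouring `c` of the subgraph of `K` induced on `A` has weak diameter, measured by the
hop distance of `L`, at most `N`: any two vertices of a monochromatic component of `K ↾ A` are
at hop distance at most `N` in `L`. -/
def HasWeakDiamLE {V : Type} (K : SimpleGraph V) (A : Set V) (L : SimpleGraph V) {m : ℕ}
    (c : V → Fin m) (N : ℝ) : Prop :=
  ∀ x ∈ A, ∀ y ∈ A, (colorGraph K A c).Reachable x y → hopDist L x y ≤ ENNReal.ofReal N

/-- `nbhd G w r S`: vertices joined to `S` by a path of weighted length at most `r`. -/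
def nbhd {V : Type} (G : SimpleGraph V) (w : Sym2 V → ℝ) (r : ℝ) (S : Set V) : Set V :=
  {v | ∃ s ∈ S, ∃ q : G.Walk v s, q.IsPath ∧ walkLen w q ≤ r}

/-- Deleting a set of vertices (keeping them as isolated vertices of the ambient type). -/
def delVerts {V : Type} (G : SimpleGraph V) (Z : Set V) : SimpleGraph V where
  Adj x y := G.Adj x y ∧ x ∉ Z ∧ y ∉ Z
  symm := by
    refine ⟨?_⟩
    rintro x y ⟨h, hx, hy⟩
    exact ⟨h.symm, hy, hx⟩
  loopless := ⟨fun x h => G.loopless.irrefl x h.1⟩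

/-- A weighted graph: a finite simple graph together with positive edge weights. -/
structure WGraph : Type 1 where
  V : Type
  fin : Finite V
  G : SimpleGraph V
  w : Sym2 V → ℝ
  pos : ∀ e ∈ G.edgeSet, 0 < w e

/-- The extended metric on the vertex set of a weighted graph. -/
noncomputable def WGraph.dist (W : WGraph) : W.V → W.V → ℝ≥0∞ := wDist W.G W.w

/-- All edge weights lie in `(0, ℓ]`. -/
def WGraph.IsBounded (W : WGraph) (ℓ : ℝ) : Prop := ∀ e ∈ W.G.edgeSet, W.w e ≤ ℓ

/-- `f` is an `n`-dimensional control function for the extended metric `d`. -/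
def IsControlOn {X : Type} (d : X → X → ℝ≥0∞) (n : ℕ) (f : ℝ → ℝ) : Prop :=
  ∀ r : ℝ, 0 < r → ∃ U : Fin (n + 1) → Set (Set X),
    (∀ x : X, ∃ i, ∃ s ∈ U i, x ∈ s) ∧
    (∀ i, ∀ s ∈ U i, ∀ t ∈ U i, s ≠ t → ∀ x ∈ s, ∀ y ∈ t, ENNReal.ofReal r < d x y) ∧
    (∀ i, ∀ s ∈ U i, ∀ x ∈ s, ∀ y ∈ s, d x y ≤ ENNReal.ofReal (f r))

/-- The asymptotic dimension of a class of weighted graphs is at most `n`. -/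
def asdimLE (F : Set WGraph) (n : ℕ) : Prop :=
  ∃ f : ℝ → ℝ, (∀ x, 0 < x → 0 < f x) ∧ ∀ W ∈ F, IsControlOn W.dist n f

/-- The Assouad–Nagata dimension of a class of weighted graphs is at most `n`:
some dilation is a common `n`-dimensional control function. -/
def ANdimLE (F : Set WGraph) (n : ℕ) : Prop :=
  ∃ (f : ℝ → ℝ) (c : ℝ), 0 < c ∧ (∀ x, 0 < x → 0 < f x) ∧ (∀ x, 0 < x → f x ≤ c * x) ∧
    ∀ W ∈ F, IsControlOn W.dist n f

/-- `H` is a minor of `G`: there are pairwise disjoint nonempty connected branch sets in `G`,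
one for each vertex of `H`, with branch sets of adjacent vertices joined by an edge. -/
def IsMinorOf {α β : Type} (H : SimpleGraph β) (G : SimpleGraph α) : Prop :=
  ∃ B : β → Set α,
    (∀ h, (B h).Nonempty) ∧
    (∀ h h', h ≠ h' → Disjoint (B h) (B h')) ∧
    (∀ h, (G.induce (B h)).Connected) ∧
    (∀ h h', H.Adj h h' → ∃ a ∈ B h, ∃ b ∈ B h', G.Adj a b)

section Aux

open SimpleGraph

lemma sum_map_le_of_nodup_subset {α : Type*} (f : α → ℝ) :
    ∀ (l₁ l₂ : List α), l₁.Nodup → l₁ ⊆ l₂ → (∀ a ∈ l₂, 0 ≤ f a) →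
    (l₁.map f).sum ≤ (l₂.map f).sum := by
  classical
  intro l₁
  induction l₁ with
  | nil =>
    intro l₂ _ _ hf
    simp only [List.map_nil, List.sum_nil]
    exact List.sum_nonneg (by
      intro a ha
      obtain ⟨e, he, rfl⟩ := List.mem_map.1 ha
      exact hf e he)
  | cons a l ih =>
    intro l₂ hnd hsub hf
    have ha2 : a ∈ l₂ := hsub List.mem_cons_self
    have hperm : l₂.Perm (a :: l₂.erase a) := List.perm_cons_erase ha2
    have hsum : (l₂.map f).sum = f a + ((l₂.erase a).map f).sum := by
      rw [(hperm.map f).sum_eq]; simp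
    rw [hsum, List.map_cons, List.sum_cons]
    obtain ⟨hal, hlnd⟩ := List.nodup_cons.1 hnd
    refine add_le_add le_rfl (ih (l₂.erase a) hlnd ?_ ?_)
    · intro x hx
      have hxa : x ≠ a := fun h => hal (h ▸ hx)
      exact (List.mem_erase_of_ne hxa).2 (hsub (List.mem_cons_of_mem _ hx))
    · intro x hx
      exact hf x (List.mem_of_mem_erase hx)

lemma walkLen_nonneg {V : Type} {G : SimpleGraph V} {w : Sym2 V → ℝ}
    (hpos : ∀ e ∈ G.edgeSet, 0 < w e) {x y : V} (q : G.Walk x y) :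
    0 ≤ walkLen w q := by
  apply List.sum_nonneg
  intro a ha
  obtain ⟨e, he, rfl⟩ := List.mem_map.1 ha
  exact (hpos e (q.edges_subset_edgeSet he)).le

lemma walkLen_cons {V : Type} {G : SimpleGraph V} {w : Sym2 V → ℝ}
    {x y z : V} (h : G.Adj x y) (p : G.Walk y z) :
    walkLen w (Walk.cons h p) = w s(x, y) + walkLen w p := by
  simp [walkLen]

lemma walkLen_nil {V : Type} {G : SimpleGraph V} {w : Sym2 V → ℝ} {x : V} :
    walkLen w (Walk.nil : G.Walk x x) = 0 := by
  simp [walkLen]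

lemma wDist_le_walk {V : Type} {G : SimpleGraph V} {w : Sym2 V → ℝ}
    (hpos : ∀ e ∈ G.edgeSet, 0 < w e) {x y : V} (q : G.Walk x y) :
    wDist G w x y ≤ ENNReal.ofReal (walkLen w q) := by
  classical
  refine le_trans (iInf_le _ ⟨q.bypass, q.bypass_isPath⟩) ?_
  apply ENNReal.ofReal_le_ofReal
  apply sum_map_le_of_nodup_subset
  · exact q.bypass_isPath.isTrail.edges_nodup
  · exact q.edges_bypass_subset
  · intro a ha
    exact (hpos a (q.edges_subset_edgeSet ha)).le

lemma power_adj_of_walk {V : Type} {G : SimpleGraph V} {w : Sym2 V → ℝ} {ℓ : ℝ}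
    (hpos : ∀ e ∈ G.edgeSet, 0 < w e) {x y : V} (hne : x ≠ y) (q : G.Walk x y)
    (h : walkLen w q ≤ ℓ) : (powerGraph G w ℓ).Adj x y :=
  show x ≠ y ∧ wDist G w x y ≤ ENNReal.ofReal ℓ from
  ⟨hne, (wDist_le_walk hpos q).trans (ENNReal.ofReal_le_ofReal h)⟩

lemma exists_power_walk_le_one {V : Type} {G : SimpleGraph V} {w : Sym2 V → ℝ} {ℓ : ℝ}
    (hpos : ∀ e ∈ G.edgeSet, 0 < w e) {x y : V} (q : G.Walk x y)
    (h : walkLen w q ≤ ℓ) : ∃ W : (powerGraph G w ℓ).Walk x y, W.length ≤ 1 := by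
  by_cases hxy : x = y
  · subst hxy; exact ⟨Walk.nil, by simp⟩
  · exact ⟨Walk.cons (power_adj_of_walk hpos hxy q h) Walk.nil, by simp⟩

lemma chunk {V : Type} {G : SimpleGraph V} {w : Sym2 V → ℝ} {ℓ : ℝ}
    (hpos : ∀ e ∈ G.edgeSet, 0 < w e) (hbd : ∀ e ∈ G.edgeSet, w e ≤ ℓ) :
    ∀ {x s : V} (q : G.Walk x s) (a : ℝ), 0 ≤ a → a ≤ ℓ → ℓ < a + walkLen w q →
    ∃ (v v' : V) (q1 : G.Walk x v) (q2 : G.Walk v' s),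
      q2.length < q.length ∧ walkLen w q1 ≤ ℓ - a ∧
      walkLen w q2 ≤ a + walkLen w q - ℓ ∧ (powerGraph G w ℓ).Adj v v' := by
  intro x s q
  induction q with
  | nil =>
    intro a _ haℓ hover
    rw [walkLen_nil] at hover
    linarith
  | @cons u b s' h p ih =>
    intro a ha0 haℓ hover
    have hmem : s(u, b) ∈ G.edgeSet := G.mem_edgeSet.2 h
    have hwe : w s(u, b) ≤ ℓ := hbd _ hmem
    have hwe0 : 0 < w s(u, b) := hpos _ hmem
    rw [walkLen_cons] at hover
    by_cases hc : ℓ < a + w s(u, b)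
    · refine ⟨u, b, Walk.nil, p, by simp, ?_, ?_, ?_⟩
      · rw [walkLen_nil]; linarith
      · rw [walkLen_cons]; linarith
      · exact power_adj_of_walk hpos h.ne (Walk.cons h Walk.nil)
          (by rw [walkLen_cons, walkLen_nil]; linarith)
    · push_neg at hc
      obtain ⟨v, v', q1, q2, h1, h2, h3, h4⟩ :=
        ih (a + w s(u, b)) (by linarith) hc (by linarith)
      refine ⟨v, v', Walk.cons h q1, q2, ?_, ?_, ?_, h4⟩
      · simpa using Nat.lt_succ_of_lt h1
      · rw [walkLen_cons]; linarith
      · rw [walkLen_cons]; linarith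

lemma exists_power_walk {V : Type} {G : SimpleGraph V} {w : Sym2 V → ℝ} {ℓ : ℝ}
    (hpos : ∀ e ∈ G.edgeSet, 0 < w e) (hbd : ∀ e ∈ G.edgeSet, w e ≤ ℓ) (hℓ : 0 < ℓ) :
    ∀ (n : ℕ) {x s : V} (q : G.Walk x s), q.length ≤ n →
    ∃ W : (powerGraph G w ℓ).Walk x s, (W.length : ℝ) ≤ 2 * walkLen w q / ℓ + 1 := by
  intro n
  induction n with
  | zero =>
    intro x s q hq
    have hxs : x = s := Walk.eq_of_length_eq_zero (Nat.le_zero.1 hq)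
    subst hxs
    refine ⟨Walk.nil, ?_⟩
    have h0 := walkLen_nonneg hpos q
    have : 0 ≤ 2 * walkLen w q / ℓ := by positivity
    simp only [Walk.length_nil, Nat.cast_zero]
    linarith
  | succ n ih =>
    intro x s q hq
    by_cases hle : walkLen w q ≤ ℓ
    · obtain ⟨W, hW⟩ := exists_power_walk_le_one hpos q hle
      refine ⟨W, ?_⟩
      have h1 : (W.length : ℝ) ≤ 1 := by exact_mod_cast hW
      have h0 := walkLen_nonneg hpos q
      have : 0 ≤ 2 * walkLen w q / ℓ := by positivity
      linarith
    · push_neg at hle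
      obtain ⟨v, v', q1, q2, hlt, hq1, hq2, hadj⟩ :=
        chunk hpos hbd q 0 le_rfl hℓ.le (by simpa using hle)
      obtain ⟨W1, hW1⟩ := exists_power_walk_le_one (ℓ := ℓ) hpos q1 (by linarith)
      obtain ⟨W2, hW2⟩ := ih q2 (by omega)
      refine ⟨W1.append (Walk.cons hadj W2), ?_⟩
      rw [Walk.length_append, Walk.length_cons]
      push_cast
      have hW1' : (W1.length : ℝ) ≤ 1 := by exact_mod_cast hW1
      have h2 : walkLen w q2 ≤ walkLen w q - ℓ := by linarith
      have h3 : 2 * walkLen w q2 / ℓ ≤ 2 * (walkLen w q - ℓ) / ℓ := by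
        rw [div_le_div_iff₀ hℓ hℓ]
        nlinarith [hℓ.le]
      have h4 : 2 * (walkLen w q - ℓ) / ℓ = 2 * walkLen w q / ℓ - 2 := by
        field_simp
      linarith

lemma center_walk {V : Type} {G : SimpleGraph V} {w : Sym2 V → ℝ} {ℓ : ℝ}
    (hpos : ∀ e ∈ G.edgeSet, 0 < w e) (hbd : ∀ e ∈ G.edgeSet, w e ≤ ℓ) (hℓ : 0 < ℓ)
    {S : Set V} {r : ℝ} {u : V} (hu : u ∈ nbhd G w r S) :
    ∃ s ∈ S, ∃ W : (powerGraph G w ℓ).Walk u s, (W.length : ℝ) ≤ 2 * r / ℓ + 1 := by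
  obtain ⟨s, hs, q, _, hlen⟩ := hu
  obtain ⟨W, hW⟩ := exists_power_walk hpos hbd hℓ q.length q le_rfl
  refine ⟨s, hs, W, hW.trans ?_⟩
  have : 2 * walkLen w q / ℓ ≤ 2 * r / ℓ := by
    rw [div_le_div_iff₀ hℓ hℓ]
    nlinarith [hℓ.le]
  linarith

lemma list_length_le_ncard {α : Type} {l : List α} {S : Set α} (h : l.Nodup)
    (hsub : ∀ a ∈ l, a ∈ S) (hS : S.Finite) : l.length ≤ S.ncard := by
  classical
  rw [← List.toFinset_card_of_nodup h, Set.ncard_eq_toFinset_card S hS]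
  apply Finset.card_le_card
  intro a ha
  rw [Set.Finite.mem_toFinset]
  exact hsub a (List.mem_toFinset.1 ha)

end Aux

/-- Theorem (Lemma `all_centered`): if `V(G) − R` is `(k,r)`-centered in `(G,φ)`, then every
`m`-colouring of `(G,φ)^ℓ − R` has weak diameter in `(G,φ)^ℓ` at most `N`, where `N` depends
only on `k`, `r` and `ℓ`. -/
theorem all_centered (k : ℕ) (r : ℝ) (hr : 0 ≤ r) (ℓ : ℝ) (hℓ : 0 < ℓ) :
    ∃ N : ℝ, 0 < N ∧
      ∀ W : WGraph, W.IsBounded ℓ → ∀ m : ℕ, 0 < m → ∀ R : Set W.V,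
        (∃ S : Set W.V, S.ncard ≤ k ∧ Rᶜ ⊆ nbhd W.G W.w r S) →
        ∀ c : W.V → Fin m,
          HasWeakDiamLE (powerGraph W.G W.w ℓ) Rᶜ (powerGraph W.G W.w ℓ) c N := by

  classical
  set h : ℝ := 2 * r / ℓ + 1 with hh
  have hh0 : 0 < h := by have : 0 ≤ 2 * r / ℓ := by positivity
                         simp only [hh]; linarith
  refine ⟨2 * h + (k : ℝ) * (2 * h + 1) + 1, by positivity, ?_⟩
  intro W hbd m _hm R ⟨S, hScard, hSsub⟩ c x hx y hy hreach
  have := W.fin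
  set P := powerGraph W.G W.w ℓ with hP
  have hpos := W.pos
  -- centers
  have hcen : ∀ u ∈ Rᶜ, ∃ s ∈ S, ∃ Wu : P.Walk u s, (Wu.length : ℝ) ≤ h :=
    fun u hu => center_walk hpos hbd hℓ (hSsub hu)
  -- the auxiliary graph on centers
  let Q : SimpleGraph W.V :=
    { Adj := fun s t => s ≠ t ∧ s ∈ S ∧ t ∈ S ∧
        ∃ Wst : P.Walk s t, (Wst.length : ℝ) ≤ 2 * h + 1
      symm := by
        refine ⟨?_⟩
        rintro s t ⟨hne, hs, ht, Wst, hW⟩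
        exact ⟨hne.symm, ht, hs, Wst.reverse, by rwa [SimpleGraph.Walk.length_reverse]⟩
      loopless := ⟨fun s hs => hs.1 rfl⟩ }
  -- a `Q`-reachability step
  have hstep : ∀ s t : W.V, s ∈ S → t ∈ S →
      (∃ Wst : P.Walk s t, (Wst.length : ℝ) ≤ 2 * h + 1) → Q.Reachable s t := by
    intro s t hs ht hW
    by_cases hst : s = t
    · subst hst; exact SimpleGraph.Reachable.refl s
    · exact SimpleGraph.Adj.reachable ⟨hst, hs, ht, hW⟩
  -- walking along a monochromatic walk, the centers stay `Q`-connected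
  have hwalk : ∀ {u v : W.V} (T : (colorGraph P Rᶜ c).Walk u v), u ∈ Rᶜ →
      ∀ s, s ∈ S → (∃ Wu : P.Walk u s, (Wu.length : ℝ) ≤ h) →
      ∀ t, t ∈ S → (∃ Wv : P.Walk v t, (Wv.length : ℝ) ≤ h) →
      Q.Reachable s t := by
    intro u v T
    induction T with
    | nil =>
      intro hu s hs hWu t ht hWv
      obtain ⟨Wu, hWu⟩ := hWu
      obtain ⟨Wv, hWv⟩ := hWv
      apply hstep s t hs ht
      refine ⟨Wu.reverse.append Wv, ?_⟩
      rw [SimpleGraph.Walk.length_append, SimpleGraph.Walk.length_reverse]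
      push_cast
      linarith
    | cons hadj T' ih =>
      intro hu s hs hWu t ht hWv
      obtain ⟨Wu, hWu⟩ := hWu
      obtain ⟨hPadj, hu1, hu2, hceq⟩ := hadj
      obtain ⟨s', hs', Wu', hWu'⟩ := hcen _ hu2
      have h1 : Q.Reachable s s' := by
        apply hstep s s' hs hs'
        refine ⟨Wu.reverse.append (SimpleGraph.Walk.cons hPadj Wu'), ?_⟩
        rw [SimpleGraph.Walk.length_append, SimpleGraph.Walk.length_reverse,
          SimpleGraph.Walk.length_cons]
        push_cast
        linarith
      exact h1.trans (ih hu2 s' hs' ⟨Wu', hWu'⟩ t ht hWv)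
  -- expanding a `Q`-walk into a `P`-walk
  have hexpand : ∀ {s t : W.V} (p : Q.Walk s t),
      ∃ Wst : P.Walk s t, (Wst.length : ℝ) ≤ (p.length : ℝ) * (2 * h + 1) := by
    intro s t p
    induction p with
    | nil => exact ⟨SimpleGraph.Walk.nil, by simp⟩
    | @cons a b _ hadj p' ih =>
      obtain ⟨W1, hW1⟩ := hadj.2.2.2
      obtain ⟨W2, hW2⟩ := ih
      refine ⟨W1.append W2, ?_⟩
      rw [SimpleGraph.Walk.length_append, SimpleGraph.Walk.length_cons]
      push_cast
      nlinarith [hW1, hW2]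
  -- support of a `Q`-walk lies in `S`
  have hsupp : ∀ {s t : W.V} (p : Q.Walk s t), s ∈ S → ∀ v ∈ p.support, v ∈ S := by
    intro s t p
    induction p with
    | nil => intro hs v hv; simp at hv; subst hv; exact hs
    | @cons a b _ hadj p' ih =>
      intro hs v hv
      rw [SimpleGraph.Walk.support_cons] at hv
      rcases List.mem_cons.1 hv with rfl | hv
      · exact hs
      · exact ih hadj.2.2.1 v hv
  -- from `Q`-reachability to a short `P`-walk
  have hshort : ∀ {s t : W.V}, s ∈ S → Q.Reachable s t →
      ∃ Wst : P.Walk s t, (Wst.length : ℝ) ≤ (k : ℝ) * (2 * h + 1) := by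
    intro s t hs hr
    obtain ⟨p⟩ := hr
    obtain ⟨Wst, hWst⟩ := hexpand p.bypass
    refine ⟨Wst, hWst.trans ?_⟩
    have hnd := p.bypass_isPath.support_nodup
    have hlen : p.bypass.support.length ≤ S.ncard :=
      list_length_le_ncard hnd
        (fun v hv => hsupp p hs v (p.support_bypass_subset hv)) (Set.toFinite S)
    rw [SimpleGraph.Walk.length_support] at hlen
    have hk : p.bypass.length ≤ k := by omega
    have : (p.bypass.length : ℝ) ≤ (k : ℝ) := by exact_mod_cast hk
    nlinarith
  -- assemble
  obtain ⟨T⟩ := hreach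
  obtain ⟨sx, hsx, Wx, hWx⟩ := hcen x hx
  obtain ⟨sy, hsy, Wy, hWy⟩ := hcen y hy
  have hQ : Q.Reachable sx sy := hwalk T hx sx hsx ⟨Wx, hWx⟩ sy hsy ⟨Wy, hWy⟩
  obtain ⟨Wc, hWc⟩ := hshort hsx hQ
  have hfinal : hopDist P x y ≤
      (((Wx.append (Wc.append Wy.reverse)).length : ℕ) : ℝ≥0∞) :=
    iInf_le _ (Wx.append (Wc.append Wy.reverse))
  refine hfinal.trans ?_
  rw [← ENNReal.ofReal_natCast]
  apply ENNReal.ofReal_le_ofReal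
  rw [SimpleGraph.Walk.length_append, SimpleGraph.Walk.length_append,
    SimpleGraph.Walk.length_reverse]
  push_cast
  linarith
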